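/- The Jaccard distance d(A,B) = 1 - |A ∩ B| / |A ∪ B| on finite subsets of a type satisfies the triangle inequality: d(A,C) ≤ d(A,B) + d(B,C). -/
import Mathlib


open Finset

/-- Jaccard similarity of finite sets, with the convention `jaccard ∅ ∅ = 1`. -/
noncomputable def jaccard {α : Type*} [DecidableEq α] (A B : Finset α) : ℝ :=
  if A ∪ B = ∅ then 1 else ((A ∩ B).card : ℝ) / ((A ∪ B).card : ℝ)

/-- The Jaccard distance `d(A,B) = 1 - jaccard A B`. -/
noncomputable def jaccardDist {α : Type*} [DecidableEq α] (A B : Finset α) : ℝ :=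
  1 - jaccard A B

lemma jaccard_le_one {α : Type*} [DecidableEq α] (A B : Finset α) : jaccard A B ≤ 1 := by
  unfold jaccard
  split
  · exact le_refl 1
  · rename_i h
    have hpos : (0:ℝ) < (A ∪ B).card := by
      have := Finset.card_pos.mpr (Finset.nonempty_of_ne_empty h)
      exact_mod_cast this
    rw [div_le_one hpos]
    exact_mod_cast Finset.card_le_card (Finset.inter_subset_union)

lemma jaccard_key_card {α : Type*} [DecidableEq α] (A B C : Finset α) :
    (A ∪ C).card + (A ∩ B).card + (B ∩ C).card + 2 * (B \ (A ∪ C)).card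
      ≤ (A ∪ B).card + (B ∪ C).card + (A ∩ C).card := by
  set U := A ∪ B ∪ C with hU
  have hcard : ∀ S : Finset α, S ⊆ U → S.card = ∑ x ∈ U, if x ∈ S then 1 else 0 := by
    intro S hS
    rw [← Finset.card_filter]
    congr 1
    rw [Finset.filter_mem_eq_inter, Finset.inter_eq_right.mpr hS]
  have hsub : ∀ x, x ∈ A ∨ x ∈ B ∨ x ∈ C → x ∈ U := by
    intro x hx; simp [hU, Finset.mem_union]; tauto
  rw [hcard (A ∪ C) (fun x hx => hsub x (by simp at hx; tauto)),
      hcard (A ∩ B) (fun x hx => hsub x (by simp at hx; tauto)),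
      hcard (B ∩ C) (fun x hx => hsub x (by simp at hx; tauto)),
      hcard (B \ (A ∪ C)) (fun x hx => hsub x (by simp at hx; tauto)),
      hcard (A ∪ B) (fun x hx => hsub x (by simp at hx; tauto)),
      hcard (B ∪ C) (fun x hx => hsub x (by simp at hx; tauto)),
      hcard (A ∩ C) (fun x hx => hsub x (by simp at hx; tauto))]
  rw [← Finset.sum_add_distrib, ← Finset.sum_add_distrib, Finset.mul_sum,
      ← Finset.sum_add_distrib, ← Finset.sum_add_distrib, ← Finset.sum_add_distrib]
  apply Finset.sum_le_sum
  intro x _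
  by_cases hA : x ∈ A <;> by_cases hB : x ∈ B <;> by_cases hC : x ∈ C <;>
    simp [hA, hB, hC]

lemma card_union3_eq {α : Type*} [DecidableEq α] (A B C : Finset α) :
    (A ∪ B ∪ C).card = (A ∪ C).card + (B \ (A ∪ C)).card := by
  rw [← Finset.card_union_of_disjoint (Finset.disjoint_sdiff)]
  congr 1
  ext x
  simp [Finset.mem_union, Finset.mem_sdiff]
  tauto

/-- The Jaccard distance satisfies the triangle inequality. -/
theorem jaccardDist_triangle {α : Type*} [DecidableEq α] (A B C : Finset α) :
    jaccardDist A C ≤ jaccardDist A B + jaccardDist B C := by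
  classical
  by_cases hAC : A ∪ C = ∅
  · have h1 : jaccardDist A C = 0 := by simp [jaccardDist, jaccard, hAC]
    have h2 : 0 ≤ jaccardDist A B := by
      have := jaccard_le_one A B; unfold jaccardDist; linarith
    have h3 : 0 ≤ jaccardDist B C := by
      have := jaccard_le_one B C; unfold jaccardDist; linarith
    linarith
  by_cases hAB : A ∪ B = ∅
  · have hA : A = ∅ := by
      have := Finset.union_eq_empty.mp hAB; exact this.1
    have hB : B = ∅ := by
      have := Finset.union_eq_empty.mp hAB; exact this.2
    have h1 : jaccardDist A B = 0 := by simp [jaccardDist, jaccard, hAB]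
    have h2 : jaccardDist B C = jaccardDist A C := by rw [hA, hB]
    linarith
  by_cases hBC : B ∪ C = ∅
  · have hB : B = ∅ := (Finset.union_eq_empty.mp hBC).1
    have hC : C = ∅ := (Finset.union_eq_empty.mp hBC).2
    have h1 : jaccardDist B C = 0 := by simp [jaccardDist, jaccard, hBC]
    have h2 : jaccardDist A B = jaccardDist A C := by rw [hB, hC]
    linarith
  -- main case
  have hn : (A ∪ B ∪ C) ≠ ∅ := by
    intro h
    exact hAB (Finset.union_eq_empty.mp h).1
  unfold jaccardDist jaccard
  rw [if_neg hAC, if_neg hAB, if_neg hBC]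
  have hnpos : (0:ℝ) < ((A ∪ B ∪ C).card : ℝ) := by
    exact_mod_cast Finset.card_pos.mpr (Finset.nonempty_of_ne_empty hn)
  have huABpos : (0:ℝ) < ((A ∪ B).card : ℝ) := by
    exact_mod_cast Finset.card_pos.mpr (Finset.nonempty_of_ne_empty hAB)
  have huBCpos : (0:ℝ) < ((B ∪ C).card : ℝ) := by
    exact_mod_cast Finset.card_pos.mpr (Finset.nonempty_of_ne_empty hBC)
  have huACpos : (0:ℝ) < ((A ∪ C).card : ℝ) := by
    exact_mod_cast Finset.card_pos.mpr (Finset.nonempty_of_ne_empty hAC)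
  have hABn : ((A ∪ B).card : ℝ) ≤ ((A ∪ B ∪ C).card : ℝ) := by
    refine Nat.cast_le.mpr (Finset.card_le_card ?_)
    intro x hx; simp at hx ⊢; tauto
  have hBCn : ((B ∪ C).card : ℝ) ≤ ((A ∪ B ∪ C).card : ℝ) := by
    refine Nat.cast_le.mpr (Finset.card_le_card ?_)
    intro x hx; simp at hx ⊢; tauto
  have hiAB : ((A ∩ B).card : ℝ) ≤ ((A ∪ B).card : ℝ) :=
    Nat.cast_le.mpr (Finset.card_le_card Finset.inter_subset_union)
  have hiBC : ((B ∩ C).card : ℝ) ≤ ((B ∪ C).card : ℝ) :=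
    Nat.cast_le.mpr (Finset.card_le_card Finset.inter_subset_union)
  have hiAC : (0:ℝ) ≤ ((A ∩ C).card : ℝ) := by positivity
  have hm : (0:ℝ) ≤ (((B \ (A ∪ C)).card : ℕ) : ℝ) := by positivity
  have hiACle : ((A ∩ C).card : ℝ) ≤ ((A ∪ C).card : ℝ) :=
    Nat.cast_le.mpr (Finset.card_le_card Finset.inter_subset_union)
  have hkey : ((A ∪ C).card : ℝ) + ((A ∩ B).card : ℝ) + ((B ∩ C).card : ℝ)
      + 2 * (((B \ (A ∪ C)).card : ℕ) : ℝ)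
      ≤ ((A ∪ B).card : ℝ) + ((B ∪ C).card : ℝ) + ((A ∩ C).card : ℝ) := by
    exact_mod_cast jaccard_key_card A B C
  have hneq : ((A ∪ B ∪ C).card : ℝ) = ((A ∪ C).card : ℝ) + (((B \ (A ∪ C)).card : ℕ) : ℝ) := by
    exact_mod_cast card_union3_eq A B C
  set n : ℝ := ((A ∪ B ∪ C).card : ℝ)
  set uAB : ℝ := ((A ∪ B).card : ℝ)
  set uBC : ℝ := ((B ∪ C).card : ℝ)
  set uAC : ℝ := ((A ∪ C).card : ℝ)
  set iAB : ℝ := ((A ∩ B).card : ℝ)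
  set iBC : ℝ := ((B ∩ C).card : ℝ)
  set iAC : ℝ := ((A ∩ C).card : ℝ)
  set m : ℝ := (((B \ (A ∪ C)).card : ℕ) : ℝ)
  have h1 : (uAB - iAB) / n ≤ 1 - iAB / uAB := by
    have e : 1 - iAB / uAB = (uAB - iAB) / uAB := by field_simp
    rw [e, div_le_div_iff₀ hnpos huABpos]
    nlinarith
  have h2 : (uBC - iBC) / n ≤ 1 - iBC / uBC := by
    have e : 1 - iBC / uBC = (uBC - iBC) / uBC := by field_simp
    rw [e, div_le_div_iff₀ hnpos huBCpos]
    nlinarith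
  have h3 : 1 - iAC / uAC ≤ (uAC - iAC) / uAC := by
    rw [sub_div, div_self (ne_of_gt huACpos)]
  have h4 : (uAC - iAC) / uAC ≤ ((uAB - iAB) + (uBC - iBC)) / n := by
    rw [div_le_div_iff₀ huACpos hnpos]
    nlinarith [mul_nonneg (sub_nonneg.mpr hiACle) hm, mul_nonneg hm hm]
  have h5 : ((uAB - iAB) + (uBC - iBC)) / n = (uAB - iAB)/n + (uBC - iBC)/n := by
    ring
  linarith
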